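/- Let p be an odd prime, let a, b be natural numbers with p not dividing a + 1, set N = 2^a · p^b, and suppose θ = 2Np + 1 is prime. If θ satisfies Condition 2-N-p for p, then θ satisfies Condition p-N-p for p. -/

import Mathlib

/-- For N = 2^a · p^b with p ∤ a + 1 and θ = 2Np + 1 prime: if 2 is not a
p-th power residue modulo θ, then neither is p. -/
theorem pNp_from_2Np
    (p a b : ℕ) (hp : p.Prime) (hpodd : Odd p) (ha : ¬ p ∣ (a + 1))
    (hθ : (2 * (2 ^ a * p ^ b) * p + 1).Prime)
    (h2Np : ¬ ∃ c : ℤ, c ^ p ≡ 2 [ZMOD ((2 * (2 ^ a * p ^ b) * p + 1 : ℕ) : ℤ)]) :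
    ¬ ∃ c : ℤ, c ^ p ≡ (p : ℤ) [ZMOD ((2 * (2 ^ a * p ^ b) * p + 1 : ℕ) : ℤ)] := by
  rintro ⟨c, hc⟩
  set n : ℕ := 2 * (2 ^ a * p ^ b) * p + 1 with hn
  set M : ℕ := 2 * (2 ^ a * p ^ b) with hM
  haveI : Fact n.Prime := ⟨hθ⟩
  have hp2 : 2 ≤ p := hp.two_le
  have hMpos : 0 < M := by positivity
  have hnM : n = M * p + 1 := rfl
  have hpltn : p < n := by
    calc p = 1 * p := (one_mul p).symm
    _ ≤ M * p := Nat.mul_le_mul_right p hMpos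
    _ < M * p + 1 := Nat.lt_succ_self _
  -- p ≠ 0 in ZMod n
  have hpne : (p : ZMod n) ≠ 0 := by
    rw [Ne, ZMod.natCast_eq_zero_iff]
    intro hdvd
    have := Nat.le_of_dvd (by omega) hdvd
    omega
  have h2ne : (2 : ZMod n) ≠ 0 := by
    have : ((2 : ℕ) : ZMod n) ≠ 0 := by
      rw [Ne, ZMod.natCast_eq_zero_iff]
      intro hdvd
      have h2 : n ≤ 2 := Nat.le_of_dvd (by norm_num) hdvd
      nlinarith [hMpos, hp2]
    simpa using this
  -- from hc : in ZMod n, (c)^p = p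
  have hcz : ((c : ZMod n)) ^ p = (p : ZMod n) := by
    have := (ZMod.intCast_eq_intCast_iff _ _ _).mpr hc
    push_cast at this
    exact this
  have hcne : (c : ZMod n) ≠ 0 := by
    intro h0
    rw [h0, zero_pow hp.ne_zero] at hcz
    exact hpne hcz.symm
  -- p ^ M = 1
  have hcard : n - 1 = M * p := by omega
  have hpM : (p : ZMod n) ^ M = 1 := by
    have : ((c : ZMod n)) ^ (n - 1) = 1 := ZMod.pow_card_sub_one_eq_one hcne
    rw [hcard] at this
    calc (p : ZMod n) ^ M = ((c : ZMod n) ^ p) ^ M := by rw [hcz]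
      _ = (c : ZMod n) ^ (M * p) := by rw [← pow_mul, mul_comm]
      _ = 1 := this
  -- key congruence : 2^(a+1) * p^(b+1) = -1 in ZMod n
  have hnkey : (2 : ZMod n) ^ (a + 1) * (p : ZMod n) ^ (b + 1) = -1 := by
    have hne : (n : ZMod n) = 0 := ZMod.natCast_self n
    have hid : (2 : ℕ) ^ (a + 1) * p ^ (b + 1) + 1 = n := by rw [hn]; ring
    have := congrArg (fun k : ℕ => (k : ZMod n)) hid
    push_cast at this
    have hne' : ((2 * (2 ^ a * p ^ b) * p + 1 : ℕ) : ZMod n) = 0 := ZMod.natCast_self n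
    push_cast at hne'
    linear_combination this + hne
  -- raise to M : M is even so (-1)^M = 1
  have hMeven : Even M := by
    rw [hM]; exact even_two_mul _
  have hkeyM : ((2 : ZMod n) ^ M) ^ (a + 1) = 1 := by
    have h1 : ((2 : ZMod n) ^ (a + 1) * (p : ZMod n) ^ (b + 1)) ^ M = 1 := by
      rw [hnkey]; exact hMeven.neg_one_pow
    calc ((2 : ZMod n) ^ M) ^ (a + 1)
        = ((2 : ZMod n) ^ M) ^ (a + 1) * ((p : ZMod n) ^ M) ^ (b + 1) := by
          rw [hpM]; ring
      _ = ((2 : ZMod n) ^ (a + 1) * (p : ZMod n) ^ (b + 1)) ^ M := by ring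
      _ = 1 := h1
  -- (2^M)^p = 1
  have hkeyp : ((2 : ZMod n) ^ M) ^ p = 1 := by
    rw [← pow_mul, ← hcard]
    exact ZMod.pow_card_sub_one_eq_one h2ne
  -- orderOf (2^M) divides p and a+1, coprime, so 2^M = 1
  have h2M1 : (2 : ZMod n) ^ M = 1 := by
    have hd1 : orderOf ((2 : ZMod n) ^ M) ∣ p := orderOf_dvd_of_pow_eq_one hkeyp
    have hd2 : orderOf ((2 : ZMod n) ^ M) ∣ (a + 1) := orderOf_dvd_of_pow_eq_one hkeyM
    have hco : Nat.Coprime p (a + 1) := (Nat.Prime.coprime_iff_not_dvd hp).mpr ha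
    have h1 : orderOf ((2 : ZMod n) ^ M) = 1 :=
      Nat.eq_one_of_dvd_coprimes hco hd1 hd2
    exact orderOf_eq_one_iff.mp h1
  -- now show 2 is a p-th power in ZMod n, contradiction with h2Np
  haveI : IsCyclic (ZMod n)ˣ := inferInstance
  obtain ⟨g, hg⟩ := IsCyclic.exists_generator (α := (ZMod n)ˣ)
  have h2u : IsUnit (2 : ZMod n) := isUnit_iff_ne_zero.mpr h2ne
  obtain ⟨k, hk0⟩ := (mem_powers_iff_mem_zpowers).mpr (hg h2u.unit)
  have hk : g ^ k = h2u.unit := hk0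
  -- g ^ (k * M) = 1
  have hcardu : Fintype.card (ZMod n)ˣ = M * p := by
    rw [ZMod.card_units_eq_totient, Nat.totient_prime hθ, hcard]
  have hgkM : g ^ (k * M) = 1 := by
    have : (h2u.unit : ZMod n) = 2 := IsUnit.unit_spec h2u
    have h2Mu : h2u.unit ^ M = 1 := by
      ext
      push_cast [this]
      exact h2M1
    rw [pow_mul, hk, h2Mu]
  have hog : orderOf g = M * p := by
    rw [orderOf_eq_card_of_forall_mem_zpowers hg, Nat.card_eq_fintype_card, hcardu]
  have hdvd : M * p ∣ k * M := hog ▸ orderOf_dvd_of_pow_eq_one hgkM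
  have hpk : p ∣ k := by
    rcases hdvd with ⟨t, ht⟩
    refine ⟨t, Nat.eq_of_mul_eq_mul_left hMpos ?_⟩
    rw [mul_comm M k, ht]; ring
  obtain ⟨m, hm⟩ := hpk
  apply h2Np
  refine ⟨(((g ^ m : (ZMod n)ˣ) : ZMod n)).val, ?_⟩
  rw [← ZMod.intCast_eq_intCast_iff]
  push_cast
  rw [ZMod.natCast_val, ZMod.cast_id]
  have : ((g ^ m : (ZMod n)ˣ) : ZMod n) ^ p = 2 := by
    have : (g ^ m) ^ p = h2u.unit := by
      rw [← pow_mul, mul_comm m p, ← hm, hk]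
    calc ((g ^ m : (ZMod n)ˣ) : ZMod n) ^ p = (((g ^ m) ^ p : (ZMod n)ˣ) : ZMod n) := by push_cast; ring
      _ = ((h2u.unit : (ZMod n)ˣ) : ZMod n) := by rw [this]
      _ = 2 := IsUnit.unit_spec h2u
  exact this
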